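/- Let m1, m2 be positive integers. Suppose Z1 is a monic polynomial of degree m1 with real coefficients, all roots of Z1 lie in the open interval (√(−b1), √(−a1)), and sup_{u ∈ [√(−b1),√(−a1)]} |Z1(u)/Z1(−u)| = E_{m1}^{(√(−b1),√(−a1))}; suppose Z2 is a monic polynomial of degree m2 with real coefficients, all roots of Z2 lie in (√(a2), √(b2)), and sup_{u ∈ [√(a2),√(b2)]} |Z2(u)/Z2(−u)| = E_{m2}^{(√(a2),√(b2))}. Define H(s) = Z1(−i s)·Z2(s). Then H(−s) ≠ 0 for every s ∈ K̃ and sup_{s ∈ K̃} |H(s)/H(−s)| = max{ E_{m1}^{(√(−b1),√(−a1))}, E_{m2}^{(√(a2),√(b2))} }. -/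

import Mathlib

/-- The segment of the positive imaginary axis `{ i·u : u ∈ [√(−b1), √(−a1)] }`. -/
noncomputable def Kt1 (a1 b1 : ℝ) : Set ℂ :=
  (fun u : ℝ => Complex.I * (u : ℂ)) '' Set.Icc (Real.sqrt (-b1)) (Real.sqrt (-a1))

/-- The segment of the positive real axis `[√(a2), √(b2)]`. -/
noncomputable def Kt2 (a2 b2 : ℝ) : Set ℂ :=
  (fun u : ℝ => (u : ℂ)) '' Set.Icc (Real.sqrt a2) (Real.sqrt b2)

/-- The Zolotarev value `E_m^{(c,d)}`: the infimum over monic real polynomials `Z` of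
degree `m` of `sup_{u ∈ [c,d]} |Z(u)/Z(−u)|`. -/
noncomputable def zolE (c d : ℝ) (m : ℕ) : ℝ :=
  sInf { e : ℝ | ∃ Z : Polynomial ℝ, Z.Monic ∧ Z.natDegree = m ∧
    e = sSup ((fun u : ℝ => |Z.eval u / Z.eval (-u)|) '' Set.Icc c d) }


open Polynomial Complex Set

lemma evmap (P : Polynomial ℝ) (x : ℝ) :
    (P.map (algebraMap ℝ ℂ)).eval (x : ℂ) = ((P.eval x : ℝ) : ℂ) := by
  rw [show ((x : ℂ)) = algebraMap ℝ ℂ x from rfl, Polynomial.eval_map,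
    Polynomial.eval₂_at_apply]
  rfl

lemma evmap_conj (P : Polynomial ℝ) (z : ℂ) :
    (P.map (algebraMap ℝ ℂ)).eval ((starRingEnd ℂ) z)
      = (starRingEnd ℂ) ((P.map (algebraMap ℝ ℂ)).eval z) := by
  rw [Polynomial.eval_map, Polynomial.eval_map, Polynomial.hom_eval₂]
  congr 1
  ext x
  simp

lemma abs_evmap_neg_I_mul (P : Polynomial ℝ) (u : ℝ) :
    ‖(P.map (algebraMap ℝ ℂ)).eval (-(Complex.I * u))‖
      = ‖(P.map (algebraMap ℝ ℂ)).eval (Complex.I * u)‖ := by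
  have h : -(Complex.I * (u : ℂ)) = (starRingEnd ℂ) (Complex.I * u) := by
    simp [map_mul, Complex.conj_I, Complex.conj_ofReal]
  rw [h, evmap_conj, Complex.norm_conj]

lemma evmap_eq_aeval (P : Polynomial ℝ) (z : ℂ) :
    (P.map (algebraMap ℝ ℂ)).eval z = Polynomial.aeval z P := by
  rw [Polynomial.eval_map, Polynomial.aeval_def]

/-- nonvanishing at points with nonzero imaginary part, given all roots real. -/
lemma ne_zero_of_roots_real (P : Polynomial ℝ) (c d : ℝ)
    (hroots : ∀ z : ℂ, Polynomial.aeval z P = 0 →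
      ∃ x ∈ Set.Ioo c d, z = (x : ℂ)) (z : ℂ) (hz : z.im ≠ 0) :
    (P.map (algebraMap ℝ ℂ)).eval z ≠ 0 := by
  intro h
  rw [evmap_eq_aeval] at h
  obtain ⟨x, _, hx⟩ := hroots z h
  apply hz
  rw [hx]
  simp

/-- nonvanishing at negative reals, given all roots in a positive interval. -/
lemma ne_zero_of_roots_pos (P : Polynomial ℝ) (c d : ℝ) (hc : 0 < c)
    (hroots : ∀ z : ℂ, Polynomial.aeval z P = 0 →
      ∃ x ∈ Set.Ioo c d, z = (x : ℂ)) (u : ℝ) (hu : 0 < u) :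
    (P.map (algebraMap ℝ ℂ)).eval (-(u : ℂ)) ≠ 0 := by
  intro h
  rw [evmap_eq_aeval] at h
  obtain ⟨x, hxI, hx⟩ := hroots _ h
  have : (-u : ℝ) = x := by
    have := hx
    rw [show (-(u:ℂ)) = ((-u : ℝ) : ℂ) by push_cast; ring] at this
    exact_mod_cast this
  have hx0 : 0 < x := lt_trans hc hxI.1
  linarith

theorem stmt1 (a1 b1 a2 b2 : ℝ) (hab1 : a1 < b1) (hb1 : b1 < 0) (ha2 : 0 < a2)
    (hab2 : a2 < b2) (m1 m2 : ℕ) (hm1 : 0 < m1) (hm2 : 0 < m2) (Z1 Z2 : Polynomial ℝ)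
    (hZ1monic : Z1.Monic) (hZ1deg : Z1.natDegree = m1)
    (hZ1roots : ∀ z : ℂ, Polynomial.aeval z Z1 = 0 →
      ∃ x ∈ Set.Ioo (Real.sqrt (-b1)) (Real.sqrt (-a1)), z = (x : ℂ))
    (hZ1opt : sSup ((fun u : ℝ => |Z1.eval u / Z1.eval (-u)|) ''
        Set.Icc (Real.sqrt (-b1)) (Real.sqrt (-a1))) =
      zolE (Real.sqrt (-b1)) (Real.sqrt (-a1)) m1)
    (hZ2monic : Z2.Monic) (hZ2deg : Z2.natDegree = m2)
    (hZ2roots : ∀ z : ℂ, Polynomial.aeval z Z2 = 0 →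
      ∃ x ∈ Set.Ioo (Real.sqrt a2) (Real.sqrt b2), z = (x : ℂ))
    (hZ2opt : sSup ((fun u : ℝ => |Z2.eval u / Z2.eval (-u)|) ''
        Set.Icc (Real.sqrt a2) (Real.sqrt b2)) =
      zolE (Real.sqrt a2) (Real.sqrt b2) m2)
    (H : ℂ → ℂ)
    (hH : ∀ s : ℂ, H s = (Z1.map (algebraMap ℝ ℂ)).eval (-(Complex.I * s)) *
      (Z2.map (algebraMap ℝ ℂ)).eval s) :
    (∀ s ∈ Kt1 a1 b1 ∪ Kt2 a2 b2, H (-s) ≠ 0) ∧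
    sSup ((fun s : ℂ => ‖H s / H (-s)‖) '' (Kt1 a1 b1 ∪ Kt2 a2 b2)) =
      max (zolE (Real.sqrt (-b1)) (Real.sqrt (-a1)) m1)
        (zolE (Real.sqrt a2) (Real.sqrt b2) m2) := by
  set c1 := Real.sqrt (-b1) with hc1def
  set d1 := Real.sqrt (-a1) with hd1def
  set c2 := Real.sqrt a2 with hc2def
  set d2 := Real.sqrt b2 with hd2def
  have hc1 : 0 < c1 := Real.sqrt_pos.2 (by linarith)
  have hc2 : 0 < c2 := Real.sqrt_pos.2 ha2
  have hc1d1 : c1 ≤ d1 := Real.sqrt_le_sqrt (by linarith)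
  have hc2d2 : c2 ≤ d2 := Real.sqrt_le_sqrt (by linarith)
  -- algebraic identities
  have key1 : ∀ u : ℝ, -(Complex.I * (Complex.I * u)) = (u : ℂ) := by
    intro u; rw [← mul_assoc, Complex.I_mul_I]; ring
  have key2 : ∀ u : ℝ, -(Complex.I * (-(Complex.I * u))) = -(u : ℂ) := by
    intro u; rw [mul_neg, neg_neg, ← mul_assoc, Complex.I_mul_I]; ring
  -- evaluations of H on the two segments
  have hH1 : ∀ u : ℝ, H (Complex.I * u) =
      ((Z1.eval u : ℝ) : ℂ) * (Z2.map (algebraMap ℝ ℂ)).eval (Complex.I * u) := by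
    intro u; rw [hH, key1, evmap]
  have hH1' : ∀ u : ℝ, H (-(Complex.I * u)) =
      ((Z1.eval (-u) : ℝ) : ℂ) * (Z2.map (algebraMap ℝ ℂ)).eval (-(Complex.I * u)) := by
    intro u; rw [hH, key2, show (-(u:ℂ)) = ((-u : ℝ) : ℂ) by push_cast; ring, evmap]
  have hH2 : ∀ u : ℝ, H (u : ℂ) =
      (Z1.map (algebraMap ℝ ℂ)).eval (-(Complex.I * u)) * ((Z2.eval u : ℝ) : ℂ) := by
    intro u; rw [hH, evmap]
  have hH2' : ∀ u : ℝ, H (-(u : ℂ)) =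
      (Z1.map (algebraMap ℝ ℂ)).eval (Complex.I * u) * ((Z2.eval (-u) : ℝ) : ℂ) := by
    intro u
    rw [hH, show (-(Complex.I * -(u:ℂ))) = Complex.I * u by ring,
      show (-(u:ℂ)) = ((-u : ℝ) : ℂ) by push_cast; ring, evmap]
  -- nonvanishing facts
  have hZ1Iu : ∀ u : ℝ, 0 < u → (Z1.map (algebraMap ℝ ℂ)).eval (Complex.I * u) ≠ 0 := by
    intro u hu
    exact ne_zero_of_roots_real Z1 c1 d1 hZ1roots _ (by simp [Complex.mul_im]; linarith)
  have hZ2Iu : ∀ u : ℝ, 0 < u → (Z2.map (algebraMap ℝ ℂ)).eval (Complex.I * u) ≠ 0 := by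
    intro u hu
    exact ne_zero_of_roots_real Z2 c2 d2 hZ2roots _ (by simp [Complex.mul_im]; linarith)
  have hZ2nIu : ∀ u : ℝ, 0 < u → (Z2.map (algebraMap ℝ ℂ)).eval (-(Complex.I * u)) ≠ 0 := by
    intro u hu
    exact ne_zero_of_roots_real Z2 c2 d2 hZ2roots _ (by simp [Complex.mul_im]; linarith)
  have hZ1neg : ∀ u : ℝ, 0 < u → (Z1.map (algebraMap ℝ ℂ)).eval (-(u : ℂ)) ≠ 0 :=
    fun u hu => ne_zero_of_roots_pos Z1 c1 d1 hc1 hZ1roots u hu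
  have hZ2neg : ∀ u : ℝ, 0 < u → (Z2.map (algebraMap ℝ ℂ)).eval (-(u : ℂ)) ≠ 0 :=
    fun u hu => ne_zero_of_roots_pos Z2 c2 d2 hc2 hZ2roots u hu
  have hZ1negR : ∀ u : ℝ, 0 < u → Z1.eval (-u) ≠ 0 := by
    intro u hu h
    apply hZ1neg u hu
    rw [show (-(u:ℂ)) = ((-u : ℝ) : ℂ) by push_cast; ring, evmap, h]
    simp
  have hZ2negR : ∀ u : ℝ, 0 < u → Z2.eval (-u) ≠ 0 := by
    intro u hu h
    apply hZ2neg u hu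
    rw [show (-(u:ℂ)) = ((-u : ℝ) : ℂ) by push_cast; ring, evmap, h]
    simp
  -- pointwise formulas for the ratio
  have hpt1 : ∀ u : ℝ, 0 < u →
      ‖H (Complex.I * u) / H (-(Complex.I * u))‖ = |Z1.eval u / Z1.eval (-u)| := by
    intro u hu
    rw [hH1, hH1', norm_div, norm_mul, norm_mul, abs_evmap_neg_I_mul Z2 u,
      mul_div_mul_right _ _ (norm_ne_zero_iff.mpr (hZ2Iu u hu)),
      Complex.norm_real, Complex.norm_real, Real.norm_eq_abs, Real.norm_eq_abs, abs_div]
  have hpt2 : ∀ u : ℝ, 0 < u →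
      ‖H (u : ℂ) / H (-(u : ℂ))‖ = |Z2.eval u / Z2.eval (-u)| := by
    intro u hu
    rw [hH2, hH2', norm_div, norm_mul, norm_mul, abs_evmap_neg_I_mul Z1 u,
      mul_div_mul_left _ _ (norm_ne_zero_iff.mpr (hZ1Iu u hu)),
      Complex.norm_real, Complex.norm_real, Real.norm_eq_abs, Real.norm_eq_abs, abs_div]
  -- part 1: nonvanishing of H(-s)
  have part1 : ∀ s ∈ Kt1 a1 b1 ∪ Kt2 a2 b2, H (-s) ≠ 0 := by
    rintro s (⟨u, hu, rfl⟩ | ⟨u, hu, rfl⟩)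
    · have hu0 : 0 < u := lt_of_lt_of_le hc1 hu.1
      rw [hH1']
      refine mul_ne_zero ?_ (hZ2nIu u hu0)
      exact_mod_cast hZ1negR u hu0
    · have hu0 : 0 < u := lt_of_lt_of_le hc2 hu.1
      rw [hH2']
      exact mul_ne_zero (hZ1Iu u hu0) (by exact_mod_cast hZ2negR u hu0)
  refine ⟨part1, ?_⟩
  -- images on each segment
  have himg1 : (fun s : ℂ => ‖H s / H (-s)‖) '' Kt1 a1 b1
      = (fun u : ℝ => |Z1.eval u / Z1.eval (-u)|) '' Set.Icc c1 d1 := by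
    rw [Kt1, Set.image_image]
    exact Set.image_congr fun u hu => hpt1 u (lt_of_lt_of_le hc1 hu.1)
  have himg2 : (fun s : ℂ => ‖H s / H (-s)‖) '' Kt2 a2 b2
      = (fun u : ℝ => |Z2.eval u / Z2.eval (-u)|) '' Set.Icc c2 d2 := by
    rw [Kt2, Set.image_image]
    exact Set.image_congr fun u hu => hpt2 u (lt_of_lt_of_le hc2 hu.1)
  -- boundedness
  have hbdd : ∀ (Z : Polynomial ℝ) (c d : ℝ), 0 < c →
      (∀ u : ℝ, 0 < u → Z.eval (-u) ≠ 0) →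
      BddAbove ((fun u : ℝ => |Z.eval u / Z.eval (-u)|) '' Set.Icc c d) := by
    intro Z c d hc hne
    refine (IsCompact.image_of_continuousOn isCompact_Icc ?_).bddAbove
    refine ContinuousOn.abs (ContinuousOn.div ?_ ?_ ?_)
    · exact Z.continuous_aeval.continuousOn
    · exact (Z.continuous_aeval.comp continuous_neg).continuousOn
    · intro u hu
      exact hne u (lt_of_lt_of_le hc hu.1)
  have hne1 : ((fun u : ℝ => |Z1.eval u / Z1.eval (-u)|) '' Set.Icc c1 d1).Nonempty :=
    (Set.nonempty_Icc.2 hc1d1).image _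
  have hne2 : ((fun u : ℝ => |Z2.eval u / Z2.eval (-u)|) '' Set.Icc c2 d2).Nonempty :=
    (Set.nonempty_Icc.2 hc2d2).image _
  rw [Set.image_union, himg1, himg2,
    csSup_union (hbdd Z1 c1 d1 hc1 hZ1negR) hne1 (hbdd Z2 c2 d2 hc2 hZ2negR) hne2,
    hZ1opt, hZ2opt]
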